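/- Given a spherical occlusion diagram D, the relative interior of every great semicircle on the unit sphere intersects at least one arc of D. -/

import Mathlib

open scoped RealInnerProductSpace

noncomputable section

/-- Points of `ℝ³`. -/
abbrev V3 : Type := EuclideanSpace ℝ (Fin 3)

/-- The unit sphere in `ℝ³`. -/
def unitSphere : Set V3 := Metric.sphere 0 1

/-- A geodesic arc on the unit sphere: the shortest spherical path between two
distinct, non-antipodal unit vectors.  Such an arc is automatically strictly
shorter than a great semicircle. -/
structure Arc : Type where
  p : V3
  q : V3
  hp : ‖p‖ = 1
  hq : ‖q‖ = 1
  hne : p ≠ q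
  hnantip : p ≠ -q

noncomputable instance : DecidableEq Arc := Classical.decEq _

namespace Arc

/-- The set of points of an arc: normalized nonnegative combinations of the
two endpoints. -/
def carrier (a : Arc) : Set V3 :=
  {x | ∃ s t : ℝ, 0 ≤ s ∧ 0 ≤ t ∧ (s ≠ 0 ∨ t ≠ 0) ∧
    x = ‖s • a.p + t • a.q‖⁻¹ • (s • a.p + t • a.q)}

/-- The two endpoints of an arc. -/
def endpoints (a : Arc) : Set V3 := {a.p, a.q}

/-- The relative interior of an arc: the arc minus its endpoints. -/
def interior (a : Arc) : Set V3 := a.carrier \ a.endpoints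

/-- The great circle containing an arc. -/
def greatCircle (a : Arc) : Set V3 := (Submodule.span ℝ {a.p, a.q} : Set V3) ∩ unitSphere

/-- Two arcs are collinear if they lie on the same great circle. -/
def Collinear (a b : Arc) : Prop := a.greatCircle = b.greatCircle

/-- `a` hits `b` at `x`: `x` is an endpoint of `a` lying in the relative
interior of `b`, and the two arcs are not collinear. -/
def HitsAt (a b : Arc) (x : V3) : Prop :=
  ¬ Collinear a b ∧ x ∈ a.endpoints ∧ x ∈ b.interior

/-- `a` hits (feeds into) `b`; equivalently, `b` blocks `a`. -/
def Hits (a b : Arc) : Prop := ∃ x, HitsAt a b x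

/-- The endpoint of `a` other than `x`. -/
def otherEnd (a : Arc) (x : V3) : V3 :=
  haveI := Classical.decEq V3
  if x = a.p then a.q else a.p

end Arc

/-- Triple product (determinant) of three vectors in `ℝ³`; its sign records
orientation. -/
def tripod (u v w : V3) : ℝ :=
  u 0 * (v 1 * w 2 - v 2 * w 1) - u 1 * (v 0 * w 2 - v 2 * w 0)
    + u 2 * (v 0 * w 1 - v 1 * w 0)

/-- The (signed) side of the great circle of `b` on which a point `y` lies. -/
def Arc.sideOf (b : Arc) (y : V3) : ℝ := tripod b.p b.q y

/-- A Spherical Occlusion Diagram: a finite non-empty collection of geodesic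
arcs on the unit sphere satisfying axioms A1–A3. -/
structure SOD where
  arcs : Finset Arc
  nonempty : arcs.Nonempty
  /-- A1: any two arcs are internally disjoint. -/
  a1 : ∀ a ∈ arcs, ∀ b ∈ arcs, a ≠ b → Disjoint a.interior b.interior
  /-- A2: each arc is blocked by arcs of the diagram at each endpoint. -/
  a2 : ∀ a ∈ arcs, ∀ x ∈ a.endpoints, ∃ b ∈ arcs, Arc.HitsAt a b x
  /-- A3: all arcs that hit the same arc reach it from the same side. -/
  a3 : ∀ b ∈ arcs, ∀ a ∈ arcs, ∀ a' ∈ arcs, ∀ x x',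
        Arc.HitsAt a b x → Arc.HitsAt a' b x' →
        0 < Arc.sideOf b (a.otherEnd x) * Arc.sideOf b (a'.otherEnd x')

/-- The union of all arcs of an SOD. -/
def SOD.union (D : SOD) : Set V3 := ⋃ a ∈ D.arcs, a.carrier

/-- A subset of the sphere is spherically convex if together with any two
non-antipodal points it contains the geodesic arc between them. -/
def SphericallyConvex (s : Set V3) : Prop :=
  ∀ x ∈ s, ∀ y ∈ s, y ≠ -x → ∀ u v : ℝ, 0 ≤ u → 0 ≤ v → (u ≠ 0 ∨ v ≠ 0) →
    ‖u • x + v • y‖⁻¹ • (u • x + v • y) ∈ s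

/-- The tiles of an SOD: the connected components of the complement of the
union of its arcs in the unit sphere. -/
def SOD.tiles (D : SOD) : Set (Set V3) :=
  {T | ∃ p ∈ unitSphere \ D.union, T = connectedComponentIn (unitSphere \ D.union) p}




namespace Stmt4Aux

section ComplexLemmas

open Complex Real

lemma im_mul_conj (z w : ℂ) :
    (z * (starRingEnd ℂ) w).im = ‖z‖ * ‖w‖ * Real.sin (z.arg - w.arg) := by
  rw [Complex.mul_im]
  simp only [Complex.conj_re, Complex.conj_im]
  rw [Real.sin_sub]
  rw [show ‖z‖ * ‖w‖ *
      (Real.sin z.arg * Real.cos w.arg - Real.cos z.arg * Real.sin w.arg) =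
      (‖z‖ * Real.sin z.arg) * (‖w‖ * Real.cos w.arg) -
      (‖z‖ * Real.cos z.arg) * (‖w‖ * Real.sin w.arg) from by ring]
  rw [Complex.norm_mul_cos_arg, Complex.norm_mul_sin_arg, Complex.norm_mul_cos_arg,
    Complex.norm_mul_sin_arg]
  ring

lemma pos_real_eq {z w : ℂ} (hw : w ≠ 0) (him : (z * (starRingEnd ℂ) w).im = 0) :
    z = ↑((z * (starRingEnd ℂ) w).re / Complex.normSq w) * w := by
  set R : ℝ := (z * (starRingEnd ℂ) w).re with hR
  have h1 : z * (starRingEnd ℂ) w = (R : ℂ) := by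
    apply Complex.ext
    · simp [hR]
    · simp [him]
  have hN : (Complex.normSq w : ℝ) ≠ 0 := (Complex.normSq_pos.mpr hw).ne'
  have h2 : z * (Complex.normSq w : ℂ) = (R : ℂ) * w := by
    calc z * (Complex.normSq w : ℂ) = z * ((starRingEnd ℂ) w * w) := by
          rw [mul_comm ((starRingEnd ℂ) w) w, Complex.mul_conj]
      _ = (z * (starRingEnd ℂ) w) * w := by ring
      _ = (R : ℂ) * w := by rw [h1]
  rw [Complex.ofReal_div, div_mul_eq_mul_div, eq_div_iff (by exact_mod_cast hN)]
  rw [mul_comm z _] at h2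
  rw [← h2]
  ring

def NotNegReal (z : ℂ) : Prop := ¬(z.re < 0 ∧ z.im = 0)

lemma arg_lt_pi_of_notNegReal {z : ℂ} (h : NotNegReal z) : z.arg < π := by
  rcases lt_or_eq_of_le (Complex.arg_le_pi z) with h' | h'
  · exact h'
  · exact absurd (Complex.arg_eq_pi_iff.mp h') h

lemma eq_pos_mul_of_arg_eq {a b : ℂ} (ha : a ≠ 0) (hb : b ≠ 0) (h : a.arg = b.arg) :
    ∃ k : ℝ, 0 < k ∧ b = ↑k * a := by
  have h1 := Complex.norm_mul_exp_arg_mul_I a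
  have h2 := Complex.norm_mul_exp_arg_mul_I b
  have ha' : (‖a‖ : ℝ) ≠ 0 := (norm_pos_iff.mpr ha).ne'
  have hb' : (0:ℝ) < ‖b‖ := norm_pos_iff.mpr hb
  refine ⟨‖b‖ / ‖a‖, by positivity, ?_⟩
  calc b = ↑(‖b‖) * Complex.exp (↑b.arg * I) := h2.symm
    _ = ↑(‖b‖ / ‖a‖) * (↑(‖a‖) * Complex.exp (↑a.arg * I)) := by
        rw [h]; rw [← mul_assoc, ← Complex.ofReal_mul, div_mul_cancel₀ _ ha']
    _ = ↑(‖b‖ / ‖a‖) * a := by rw [h1]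

lemma eq_neg_mul_of_arg_eq_add_pi {a b : ℂ} (ha : a ≠ 0) (hb : b ≠ 0)
    (h : b.arg = a.arg + π) : ∃ k : ℝ, 0 < k ∧ b = -(↑k * a) := by
  have h1 := Complex.norm_mul_exp_arg_mul_I a
  have h2 := Complex.norm_mul_exp_arg_mul_I b
  have ha' : (‖a‖ : ℝ) ≠ 0 := (norm_pos_iff.mpr ha).ne'
  refine ⟨‖b‖ / ‖a‖, by
    have := norm_pos_iff.mpr hb
    positivity, ?_⟩
  calc b = ↑(‖b‖) * Complex.exp (↑b.arg * I) := h2.symm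
    _ = ↑(‖b‖) * (Complex.exp (↑a.arg * I) * Complex.exp (↑π * I)) := by
        rw [h, show ((↑(a.arg + π) : ℂ) * I) = ↑a.arg * I + ↑π * I from by push_cast; ring,
          Complex.exp_add]
    _ = -(↑(‖b‖ / ‖a‖) * (↑(‖a‖) * Complex.exp (↑a.arg * I))) := by
        rw [Complex.exp_pi_mul_I, ← mul_assoc ((↑(‖b‖ / ‖a‖) : ℂ)),
          ← Complex.ofReal_mul, div_mul_cancel₀ _ ha']
        ring
    _ = -(↑(‖b‖ / ‖a‖) * a) := by rw [h1]

lemma aux_argmin (a b : ℂ) (ha : a ≠ 0) (hb : b ≠ 0)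
    (hcone : ∀ s t : ℝ, 0 ≤ s → 0 ≤ t → (↑s * a + ↑t * b : ℂ) ≠ 0 →
      NotNegReal (↑s * a + ↑t * b : ℂ))
    (hab : a.arg ≤ b.arg) {s t : ℝ} (hs : 0 < s) (ht : 0 < t)
    (hc : (↑s * a + ↑t * b : ℂ) ≠ 0) :
    a.arg ≤ (↑s * a + ↑t * b : ℂ).arg := by
  set c : ℂ := ↑s * a + ↑t * b with hcdef
  have hNa : NotNegReal a := by
    have := hcone 1 0 zero_le_one le_rfl (by simpa using ha)
    simpa using this
  have hNb : NotNegReal b := by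
    have := hcone 0 1 le_rfl zero_le_one (by simpa using hb)
    simpa using this
  have hNc : NotNegReal c := hcone s t hs.le ht.le hc
  have haπ : a.arg < π := arg_lt_pi_of_notNegReal hNa
  have hbπ : b.arg < π := arg_lt_pi_of_notNegReal hNb
  have hcπ : c.arg < π := arg_lt_pi_of_notNegReal hNc
  have haπ' := Complex.neg_pi_lt_arg a
  have hbπ' := Complex.neg_pi_lt_arg b
  have hcπ' := Complex.neg_pi_lt_arg c
  have habsa : 0 < ‖a‖ := norm_pos_iff.mpr ha
  have habsb : 0 < ‖b‖ := norm_pos_iff.mpr hb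
  have habsc : 0 < ‖c‖ := norm_pos_iff.mpr hc
  rcases eq_or_lt_of_le hab with heq | hlt
  · obtain ⟨k, hkpos, hba⟩ := eq_pos_mul_of_arg_eq ha hb heq
    have hck : c = ↑(s + t * k) * a := by rw [hcdef, hba]; push_cast; ring
    rw [hck, Complex.arg_real_mul a (by positivity)]
  · have h1 : (c * (starRingEnd ℂ) a).im = t * (b * (starRingEnd ℂ) a).im := by
      rw [show c * (starRingEnd ℂ) a =
          ↑s * (a * (starRingEnd ℂ) a) + ↑t * (b * (starRingEnd ℂ) a) from by rw [hcdef]; ring]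
      rw [Complex.mul_conj]
      simp [Complex.add_im, Complex.mul_im]
    have h2 : (c * (starRingEnd ℂ) b).im = s * (a * (starRingEnd ℂ) b).im := by
      rw [show c * (starRingEnd ℂ) b =
          ↑t * (b * (starRingEnd ℂ) b) + ↑s * (a * (starRingEnd ℂ) b) from by rw [hcdef]; ring]
      rw [Complex.mul_conj]
      simp [Complex.add_im, Complex.mul_im]
    rw [im_mul_conj, im_mul_conj] at h1
    rw [im_mul_conj, im_mul_conj] at h2
    rcases lt_trichotomy (b.arg - a.arg) π with hcase | hcase | hcase
    · by_contra hγ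
      push_neg at hγ
      have hsinβα : 0 < Real.sin (b.arg - a.arg) :=
        Real.sin_pos_of_pos_of_lt_pi (by linarith) hcase
      have hRHS : 0 < t * (‖b‖ * ‖a‖ * Real.sin (b.arg - a.arg)) := by
        positivity
      have hsinγα : 0 < Real.sin (c.arg - a.arg) := by
        by_contra hcon
        push_neg at hcon
        nlinarith [mul_pos habsc habsa]
      have hlt2 : c.arg - a.arg < -π := by
        by_contra hge
        push_neg at hge
        have h0 : 0 ≤ Real.sin (-(c.arg - a.arg)) :=
          Real.sin_nonneg_of_nonneg_of_le_pi (by linarith) (by linarith)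
        rw [Real.sin_neg] at h0
        linarith
      have hsinγβ : 0 < Real.sin (c.arg - b.arg) := by
        have hper : Real.sin (c.arg - b.arg) = Real.sin (c.arg - b.arg + 2 * π) :=
          (Real.sin_add_two_pi _).symm
        rw [hper]
        exact Real.sin_pos_of_pos_of_lt_pi (by linarith) (by linarith)
      have hsinαβ : Real.sin (a.arg - b.arg) < 0 := by
        rw [show a.arg - b.arg = -(b.arg - a.arg) from by ring, Real.sin_neg]; linarith
      have hL : 0 < ‖c‖ * ‖b‖ * Real.sin (c.arg - b.arg) := by positivity
      have hR : s * (‖a‖ * ‖b‖ * Real.sin (a.arg - b.arg)) < 0 :=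
        mul_neg_of_pos_of_neg hs
          (mul_neg_of_pos_of_neg (mul_pos habsa habsb) hsinαβ)
      linarith
    · obtain ⟨k, hkpos, hba⟩ := eq_neg_mul_of_arg_eq_add_pi ha hb (by linarith)
      set k' : ℝ := s - t * k with hk'
      have hck : c = ↑k' * a := by rw [hcdef, hba, hk']; push_cast; ring
      have hk0 : k' ≠ 0 := by
        intro h
        rw [hck, h] at hc
        simp at hc
      rcases hk0.lt_or_gt with hkneg | hkpos'
      · have hcb : c = ↑(-k' / k) * b := by
          rw [hck, hba]
          rw [show ((↑(-k' / k) : ℂ) * -(↑k * a)) = ↑(k' / k * k) * a from by push_cast; ring]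
          rw [div_mul_cancel₀ _ (ne_of_gt hkpos)]
        rw [hcb, Complex.arg_real_mul b (by
          have : 0 < -k' := by linarith
          positivity)]
        exact hab
      · rw [hck, Complex.arg_real_mul a hkpos']
    · exfalso
      have hα0 : a.arg < 0 := by linarith
      have hβ0 : 0 < b.arg := by linarith
      have haim : a.im < 0 := by
        rw [← Complex.norm_mul_sin_arg a]
        have hsa : Real.sin a.arg < 0 := by
          have h0 : 0 < Real.sin (-a.arg) :=
            Real.sin_pos_of_pos_of_lt_pi (by linarith) (by linarith)
          rw [Real.sin_neg] at h0; linarith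
        nlinarith
      have hbim : 0 < b.im := by
        rw [← Complex.norm_mul_sin_arg b]
        have hsb : 0 < Real.sin b.arg := Real.sin_pos_of_pos_of_lt_pi hβ0 hbπ
        nlinarith
      have hsinαβ : 0 < Real.sin (a.arg - b.arg) := by
        have hper : Real.sin (a.arg - b.arg) = Real.sin (a.arg - b.arg + 2 * π) :=
          (Real.sin_add_two_pi _).symm
        rw [hper]
        exact Real.sin_pos_of_pos_of_lt_pi (by linarith) (by linarith)
      set z : ℂ := ↑b.im * a + ↑(-a.im) * b with hz
      have hzim : z.im = 0 := by
        rw [hz]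
        simp only [Complex.add_im, Complex.mul_im, Complex.ofReal_re, Complex.ofReal_im]
        ring
      have hzre : z.re < 0 := by
        have hre : z.re = -((a * (starRingEnd ℂ) b).im) := by
          rw [hz]
          simp only [Complex.add_re, Complex.mul_re, Complex.mul_im, Complex.ofReal_re,
            Complex.ofReal_im, Complex.conj_re, Complex.conj_im]
          ring
        rw [hre, im_mul_conj]
        have := mul_pos (mul_pos habsa habsb) hsinαβ
        linarith
      have hzne : z ≠ 0 := by
        intro h
        rw [h] at hzre
        simp at hzre
      exact hcone b.im (-a.im) hbim.le (by linarith) hzne ⟨hzre, hzim⟩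

lemma argmin_cone (a b : ℂ)
    (hcone : ∀ s t : ℝ, 0 ≤ s → 0 ≤ t → (↑s * a + ↑t * b : ℂ) ≠ 0 →
      NotNegReal (↑s * a + ↑t * b : ℂ))
    {s t : ℝ} (hs : 0 ≤ s) (ht : 0 ≤ t) (hc : (↑s * a + ↑t * b : ℂ) ≠ 0) :
    (a ≠ 0 ∧ a.arg ≤ (↑s * a + ↑t * b : ℂ).arg) ∨
    (b ≠ 0 ∧ b.arg ≤ (↑s * a + ↑t * b : ℂ).arg) := by
  have hswap : ∀ s' t' : ℝ, 0 ≤ s' → 0 ≤ t' → (↑s' * b + ↑t' * a : ℂ) ≠ 0 →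
      NotNegReal (↑s' * b + ↑t' * a : ℂ) := by
    intro s' t' h1 h2 h3
    have h4 : (↑t' * a + ↑s' * b : ℂ) = ↑s' * b + ↑t' * a := by ring
    have := hcone t' s' h2 h1 (by rw [h4]; exact h3)
    rwa [h4] at this
  by_cases ha : a = 0
  · right
    have hb : b ≠ 0 := by
      intro h; apply hc; rw [ha, h]; ring
    have ht0 : t ≠ 0 := by
      intro h; apply hc; rw [ha, h]; simp
    have he : (↑s * a + ↑t * b : ℂ) = ↑t * b := by rw [ha]; ring
    rw [he, Complex.arg_real_mul b (lt_of_le_of_ne ht (Ne.symm ht0))]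
    exact ⟨hb, le_rfl⟩
  by_cases hb : b = 0
  · left
    have hs0 : s ≠ 0 := by
      intro h; apply hc; rw [hb, h]; simp
    have he : (↑s * a + ↑t * b : ℂ) = ↑s * a := by rw [hb]; ring
    rw [he, Complex.arg_real_mul a (lt_of_le_of_ne hs (Ne.symm hs0))]
    exact ⟨ha, le_rfl⟩
  by_cases hs0 : s = 0
  · right
    have ht0 : t ≠ 0 := by
      intro h; apply hc; rw [hs0, h]; simp
    have he : (↑s * a + ↑t * b : ℂ) = ↑t * b := by rw [hs0]; simp
    rw [he, Complex.arg_real_mul b (lt_of_le_of_ne ht (Ne.symm ht0))]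
    exact ⟨hb, le_rfl⟩
  by_cases ht0 : t = 0
  · left
    have he : (↑s * a + ↑t * b : ℂ) = ↑s * a := by rw [ht0]; simp
    rw [he, Complex.arg_real_mul a (lt_of_le_of_ne hs (Ne.symm hs0))]
    exact ⟨ha, le_rfl⟩
  have hs' : 0 < s := lt_of_le_of_ne hs (Ne.symm hs0)
  have ht' : 0 < t := lt_of_le_of_ne ht (Ne.symm ht0)
  rcases le_total a.arg b.arg with h | h
  · exact Or.inl ⟨ha, aux_argmin a b ha hb hcone h hs' ht' hc⟩
  · right
    refine ⟨hb, ?_⟩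
    have h4 : (↑t * b + ↑s * a : ℂ) = ↑s * a + ↑t * b := by ring
    have := aux_argmin b a hb ha hswap h ht' hs' (by rw [h4]; exact hc)
    rwa [h4] at this

end ComplexLemmas

lemma combo_ne_zero (a : Arc) {s t : ℝ} (hs : 0 ≤ s) (ht : 0 ≤ t) (hst : s ≠ 0 ∨ t ≠ 0) :
    s • a.p + t • a.q ≠ 0 := by
  intro h
  have hs' : s • a.p = -(t • a.q) := eq_neg_of_add_eq_zero_left h
  have hnorm : s = t := by
    have hn := congrArg norm hs'
    rw [norm_smul, norm_neg, norm_smul, a.hp, a.hq, Real.norm_eq_abs, Real.norm_eq_abs,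
      abs_of_nonneg hs, abs_of_nonneg ht] at hn
    simpa using hn
  rcases eq_or_lt_of_le hs with h0 | hpos
  · rcases hst with h1 | h1
    · exact h1 h0.symm
    · exact h1 (hnorm ▸ h0.symm)
  · apply a.hnantip
    have : s • a.p = s • (-a.q) := by rw [hs', hnorm]; simp
    exact smul_right_injective V3 (ne_of_gt hpos) this

lemma unit_smul (a : Arc) {s t : ℝ} (hs : 0 ≤ s) (ht : 0 ≤ t) (hst : s ≠ 0 ∨ t ≠ 0) :
    ‖(‖s • a.p + t • a.q‖⁻¹ • (s • a.p + t • a.q))‖ = 1 := by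
  have h := combo_ne_zero a hs ht hst
  rw [norm_smul, Real.norm_eq_abs, abs_of_nonneg (by positivity),
    inv_mul_cancel₀ (norm_ne_zero_iff.mpr h)]

lemma mem_carrier (a : Arc) {s t : ℝ} (hs : 0 ≤ s) (ht : 0 ≤ t) (hst : s ≠ 0 ∨ t ≠ 0) :
    ‖s • a.p + t • a.q‖⁻¹ • (s • a.p + t • a.q) ∈ a.carrier :=
  ⟨s, t, hs, ht, hst, rfl⟩

lemma norm_of_mem {a : Arc} {x : V3} (hx : x ∈ a.carrier) : ‖x‖ = 1 := by
  obtain ⟨s, t, hs, ht, hst, rfl⟩ := hx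
  exact unit_smul a hs ht hst

lemma p_mem_carrier (a : Arc) : a.p ∈ a.carrier := by
  have h := mem_carrier a (s := 1) (t := 0) zero_le_one le_rfl (Or.inl one_ne_zero)
  simpa [a.hp] using h

lemma q_mem_carrier (a : Arc) : a.q ∈ a.carrier := by
  have h := mem_carrier a (s := 0) (t := 1) le_rfl zero_le_one (Or.inr one_ne_zero)
  simpa [a.hq] using h

lemma interior_rep {a : Arc} {x : V3} (hx : x ∈ a.interior) :
    ∃ s t : ℝ, 0 < s ∧ 0 < t ∧ x = ‖s • a.p + t • a.q‖⁻¹ • (s • a.p + t • a.q) := by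
  obtain ⟨⟨s, t, hs, ht, hst, rfl⟩, hne⟩ := hx
  rcases eq_or_lt_of_le hs with h0 | hspos
  · exfalso
    apply hne
    have ht' : t ≠ 0 := by
      rcases hst with h1 | h1
      · exact absurd h0.symm h1
      · exact h1
    have ht'' : 0 < t := lt_of_le_of_ne ht (Ne.symm ht')
    right
    rw [← h0]
    show ‖(0:ℝ) • a.p + t • a.q‖⁻¹ • ((0:ℝ) • a.p + t • a.q) = a.q
    rw [zero_smul, zero_add, norm_smul, Real.norm_eq_abs, abs_of_pos ht'', a.hq, mul_one,
      smul_smul, inv_mul_cancel₀ (ne_of_gt ht''), one_smul]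
  rcases eq_or_lt_of_le ht with h0 | htpos
  · exfalso
    apply hne
    left
    rw [← h0]
    show ‖s • a.p + (0:ℝ) • a.q‖⁻¹ • (s • a.p + (0:ℝ) • a.q) = a.p
    rw [zero_smul, add_zero, norm_smul, Real.norm_eq_abs, abs_of_pos hspos, a.hp, mul_one,
      smul_smul, inv_mul_cancel₀ (ne_of_gt hspos), one_smul]
  exact ⟨s, t, hspos, htpos, rfl⟩

def Fmap (m n : V3) : V3 →ₗ[ℝ] ℂ where
  toFun x := (⟪m, x⟫ : ℂ) + (⟪n, x⟫ : ℂ) * Complex.I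
  map_add' x y := by
    simp only [inner_add_right]
    push_cast
    ring
  map_smul' c x := by
    simp only [real_inner_smul_right, RingHom.id_apply, Complex.real_smul]
    push_cast
    ring

lemma Fmap_re (m n x : V3) : ((Fmap m n) x).re = ⟪m, x⟫ := by
  simp [Fmap]

lemma Fmap_im (m n x : V3) : ((Fmap m n) x).im = ⟪n, x⟫ := by
  simp [Fmap]

lemma real_mul_re (r : ℝ) (z : ℂ) : ((r : ℂ) * z).re = r * z.re := by
  simp [Complex.mul_re]

lemma real_mul_im (r : ℝ) (z : ℂ) : ((r : ℂ) * z).im = r * z.im := by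
  simp [Complex.mul_im]

lemma exists_normal (p m : V3) : ∃ n : V3, ‖n‖ = 1 ∧ ⟪p, n⟫ = 0 ∧ ⟪m, n⟫ = 0 := by
  set K : Submodule ℝ V3 := Submodule.span ℝ {p, m} with hK
  have hKne : Kᗮ ≠ ⊥ := by
    intro hbot
    have htop : K = ⊤ := Submodule.orthogonal_eq_bot_iff.mp hbot
    have h1 : Module.finrank ℝ K ≤ 2 := by
      classical
      have h2 := finrank_span_finset_le_card (R := ℝ) ({p, m} : Finset V3)
      have h3 : ((({p, m} : Finset V3) : Set V3)).finrank ℝ =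
          Module.finrank ℝ (Submodule.span ℝ ((({p, m} : Finset V3) : Set V3))) := rfl
      rw [h3] at h2
      have h4 : ((({p, m} : Finset V3) : Set V3)) = ({p, m} : Set V3) := by simp
      rw [h4] at h2
      refine h2.trans ?_
      refine (Finset.card_insert_le _ _).trans ?_
      simp
    rw [htop] at h1
    rw [finrank_top] at h1
    rw [finrank_euclideanSpace_fin] at h1
    omega
  obtain ⟨n₀, hn₀K, hn₀⟩ := (Submodule.ne_bot_iff _).mp hKne
  have hperp := (Submodule.mem_orthogonal K n₀).mp hn₀K
  have hpmem : p ∈ K := Submodule.subset_span (by simp)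
  have hmmem : m ∈ K := Submodule.subset_span (by simp)
  refine ⟨‖n₀‖⁻¹ • n₀, norm_smul_inv_norm hn₀, ?_, ?_⟩
  · rw [real_inner_smul_right, hperp p hpmem, mul_zero]
  · rw [real_inner_smul_right, hperp m hmmem, mul_zero]

lemma basis_expansion {p m n : V3} (hp : ‖p‖ = 1) (hm : ‖m‖ = 1) (hn : ‖n‖ = 1)
    (hpm : ⟪p, m⟫ = 0) (hpn : ⟪p, n⟫ = 0) (hmn : ⟪m, n⟫ = 0) (x : V3) :
    x = ⟪p, x⟫ • p + ⟪m, x⟫ • m + ⟪n, x⟫ • n := by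
  have hpp : ⟪p, p⟫ = 1 := by
    rw [real_inner_self_eq_norm_mul_norm, hp, mul_one]
  have hmm : ⟪m, m⟫ = 1 := by
    rw [real_inner_self_eq_norm_mul_norm, hm, mul_one]
  have hnn : ⟪n, n⟫ = 1 := by
    rw [real_inner_self_eq_norm_mul_norm, hn, mul_one]
  have hmp : ⟪m, p⟫ = 0 := by rw [real_inner_comm]; exact hpm
  have hnp : ⟪n, p⟫ = 0 := by rw [real_inner_comm]; exact hpn
  have hnm : ⟪n, m⟫ = 0 := by rw [real_inner_comm]; exact hmn
  have honb : Orthonormal ℝ ![p, m, n] := by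
    rw [orthonormal_iff_ite]
    intro i j
    fin_cases i <;> fin_cases j <;>
      simp [hpp, hmm, hnn, hpm, hpn, hmn, hmp, hnp, hnm, hp, hm, hn]
  set K : Submodule ℝ V3 := Submodule.span ℝ (Set.range ![p, m, n]) with hK
  have hKtop : K = ⊤ := by
    apply Submodule.eq_top_of_finrank_eq
    rw [finrank_span_eq_card honb.linearIndependent]
    simp [finrank_euclideanSpace_fin]
  set y : V3 := x - (⟪p, x⟫ • p + ⟪m, x⟫ • m + ⟪n, x⟫ • n) with hy
  have hyp : ⟪p, y⟫ = 0 := by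
    rw [hy]
    simp only [inner_sub_right, inner_add_right, real_inner_smul_right, hpp, hpm, hpn]
    ring
  have hym : ⟪m, y⟫ = 0 := by
    rw [hy]
    simp only [inner_sub_right, inner_add_right, real_inner_smul_right, hmm, hmp, hmn]
    ring
  have hyn : ⟪n, y⟫ = 0 := by
    rw [hy]
    simp only [inner_sub_right, inner_add_right, real_inner_smul_right, hnn, hnp, hnm]
    ring
  have hyK : y ∈ Kᗮ := by
    rw [Submodule.mem_orthogonal]
    intro u hu
    induction hu using Submodule.span_induction with
    | mem u hu =>
      obtain ⟨i, rfl⟩ := hu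
      fin_cases i
      · exact hyp
      · exact hym
      · exact hyn
    | zero => exact inner_zero_left y
    | add u v _ _ h1 h2 => rw [inner_add_left, h1, h2, add_zero]
    | smul c u _ h1 => rw [real_inner_smul_left, h1, mul_zero]
  rw [hKtop, Submodule.top_orthogonal_eq_bot, Submodule.mem_bot] at hyK
  exact sub_eq_zero.mp hyK

lemma span_eq_ker {Lm : V3 →ₗ[ℝ] ℝ} (hL : Lm ≠ 0) (a : Arc)
    (h1 : Lm a.p = 0) (h2 : Lm a.q = 0) :
    Submodule.span ℝ {a.p, a.q} = LinearMap.ker Lm := by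
  have hli : LinearIndependent ℝ ![a.p, a.q] := by
    rw [linearIndependent_fin2]
    simp only [Matrix.cons_val_one, Matrix.head_cons, Matrix.cons_val_zero]
    constructor
    · intro h
      have h' := a.hq
      rw [h, norm_zero] at h'
      exact one_ne_zero h'.symm
    · intro c hc
      have hnorm := congrArg norm hc
      rw [norm_smul, a.hq, a.hp, Real.norm_eq_abs, mul_one] at hnorm
      rcases (abs_eq zero_le_one).mp hnorm with h1' | h1'
      · rw [h1', one_smul] at hc
        exact a.hne hc.symm
      · rw [h1', neg_one_smul] at hc
        exact a.hnantip hc.symm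
  have hker : Module.finrank ℝ (LinearMap.ker Lm) = 2 := by
    have hsum := LinearMap.finrank_range_add_finrank_ker Lm
    have hrange : Module.finrank ℝ (LinearMap.range Lm) = 1 := by
      have hle : Module.finrank ℝ (LinearMap.range Lm) ≤ 1 := by
        have h := Submodule.finrank_le (LinearMap.range Lm)
        rwa [Module.finrank_self] at h
      have hne : LinearMap.range Lm ≠ ⊥ := fun h => hL (LinearMap.range_eq_bot.mp h)
      have hpos : Module.finrank ℝ (LinearMap.range Lm) ≠ 0 := by
        intro h0
        exact hne (Submodule.finrank_eq_zero.mp h0)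
      omega
    rw [hrange, finrank_euclideanSpace_fin] at hsum
    omega
  apply Submodule.eq_of_le_of_finrank_eq
  · rw [Submodule.span_le]
    intro x hx
    simp only [Set.mem_insert_iff, Set.mem_singleton_iff] at hx
    rcases hx with rfl | rfl
    · exact LinearMap.mem_ker.mpr h1
    · exact LinearMap.mem_ker.mpr h2
  · have hr : Set.range ![a.p, a.q] = {a.p, a.q} := by
      ext x
      simp only [Set.mem_range, Fin.exists_fin_two, Matrix.cons_val_zero, Matrix.cons_val_one,
        Matrix.head_cons, Set.mem_insert_iff, Set.mem_singleton_iff]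
      tauto
    have hsp : Module.finrank ℝ (Submodule.span ℝ ({a.p, a.q} : Set V3)) = 2 := by
      rw [← hr, finrank_span_eq_card hli]
      simp
    rw [hsp, hker]

end Stmt4Aux

set_option maxHeartbeats 2000000 in
/-- Given a spherical occlusion diagram `D`, the relative interior
of every great semicircle on the unit sphere intersects at least one arc of
`D`.  The great semicircle has (antipodal) endpoints `p` and `-p` and midpoint
`m`, and its relative interior consists of the points `s • p + t • m` with
`s² + t² = 1` and `t > 0`. -/
theorem stmt_4 (D : SOD) (p m : V3) (hp : ‖p‖ = 1) (hm : ‖m‖ = 1)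
    (hpm : ⟪p, m⟫ = 0) :
    ∃ a ∈ D.arcs, ∃ x ∈ a.carrier, ∃ s t : ℝ,
      0 < t ∧ s ^ 2 + t ^ 2 = 1 ∧ x = s • p + t • m := by
  classical
  by_contra hcon
  push_neg at hcon
  obtain ⟨n, hn, hpn, hmn⟩ := Stmt4Aux.exists_normal p m
  set F : V3 →ₗ[ℝ] ℂ := Stmt4Aux.Fmap m n with hF
  have hexpb : ∀ x : V3, x = ⟪p, x⟫ • p + ⟪m, x⟫ • m + ⟪n, x⟫ • n :=
    Stmt4Aux.basis_expansion hp hm hn hpm hpn hmn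
  have hpp : ⟪p, p⟫ = 1 := by rw [real_inner_self_eq_norm_mul_norm, hp, mul_one]
  have hmm : ⟪m, m⟫ = 1 := by rw [real_inner_self_eq_norm_mul_norm, hm, mul_one]
  have hmp : ⟪m, p⟫ = 0 := by rw [real_inner_comm]; exact hpm
  -- the avoidance hypothesis, in complex form
  have havoid : ∀ a ∈ D.arcs, ∀ x ∈ a.carrier, ¬(0 < (F x).re ∧ (F x).im = 0) := by
    rintro a ha x hx ⟨h1, h2⟩
    rw [hF, Stmt4Aux.Fmap_re] at h1
    rw [hF, Stmt4Aux.Fmap_im] at h2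
    have hx1 : ‖x‖ = 1 := Stmt4Aux.norm_of_mem hx
    set s := ⟪p, x⟫ with hsdef
    set t := ⟪m, x⟫ with htdef
    have hexp := hexpb x
    rw [h2, zero_smul, add_zero] at hexp
    have hsum : s ^ 2 + t ^ 2 = 1 := by
      have hinner : ⟪x, x⟫ = 1 := by
        rw [real_inner_self_eq_norm_mul_norm, hx1, mul_one]
      rw [hexp] at hinner
      simp only [inner_add_left, inner_add_right, real_inner_smul_left, real_inner_smul_right,
        hpp, hmm, hpm, hmp] at hinner
      nlinarith [hinner]
    exact hcon a ha x hx s t h1 hsum hexp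
  -- linearity of F on combinations
  have hemb : ∀ (a : Arc) (s t : ℝ),
      (↑s * -(F a.p) + ↑t * -(F a.q) : ℂ) = -(F (s • a.p + t • a.q)) := by
    intro a s t
    rw [map_add, map_smul, map_smul, Complex.real_smul, Complex.real_smul]
    ring
  have hembp : ∀ (a : Arc) (s t : ℝ),
      F (s • a.p + t • a.q) = (↑s * F a.p + ↑t * F a.q : ℂ) := by
    intro a s t
    rw [map_add, map_smul, map_smul, Complex.real_smul, Complex.real_smul]
  -- cone condition
  have hconeN : ∀ a ∈ D.arcs, ∀ s t : ℝ, 0 ≤ s → 0 ≤ t →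
      (↑s * -(F a.p) + ↑t * -(F a.q) : ℂ) ≠ 0 →
      Stmt4Aux.NotNegReal (↑s * -(F a.p) + ↑t * -(F a.q) : ℂ) := by
    intro a ha s t hs ht hne
    rw [hemb a s t] at hne ⊢
    set v := s • a.p + t • a.q with hv
    have hvne : v ≠ 0 := by
      intro h
      apply hne
      rw [h, map_zero, neg_zero]
    have hst : s ≠ 0 ∨ t ≠ 0 := by
      by_contra hcc
      push_neg at hcc
      apply hvne
      rw [hv, hcc.1, hcc.2]
      simp
    have hmem := Stmt4Aux.mem_carrier a hs ht hst
    have hnv : 0 < ‖v‖ := norm_pos_iff.mpr hvne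
    rintro ⟨hre, him⟩
    rw [Complex.neg_re, neg_lt_zero] at hre
    rw [Complex.neg_im, neg_eq_zero] at him
    refine havoid a ha _ hmem ⟨?_, ?_⟩
    · rw [map_smul, Complex.real_smul, Stmt4Aux.real_mul_re]
      positivity
    · rw [map_smul, Complex.real_smul, Stmt4Aux.real_mul_im, him, mul_zero]
  -- every arc has an endpoint with nonzero F
  have hendF : ∀ a : Arc, a ∈ D.arcs → (F a.p ≠ 0 ∨ F a.q ≠ 0) := by
    intro a ha
    by_contra hb
    push_neg at hb
    have key : ∀ e : V3, ‖e‖ = 1 → F e = 0 → e = p ∨ e = -p := by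
      intro e he hFe
      have h2 : ⟪m, e⟫ = 0 := by
        have := congrArg Complex.re hFe
        rwa [hF, Stmt4Aux.Fmap_re, Complex.zero_re] at this
      have h3 : ⟪n, e⟫ = 0 := by
        have := congrArg Complex.im hFe
        rwa [hF, Stmt4Aux.Fmap_im, Complex.zero_im] at this
      have hexp := hexpb e
      rw [h2, h3, zero_smul, zero_smul, add_zero, add_zero] at hexp
      have habs : |⟪p, e⟫| = 1 := by
        have hne := congrArg norm hexp
        rw [norm_smul, hp, mul_one, Real.norm_eq_abs, he] at hne
        exact hne.symm
      rcases (abs_eq zero_le_one).mp habs with h4 | h4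
      · left; rw [hexp, h4, one_smul]
      · right; rw [hexp, h4, neg_one_smul]
    rcases key a.p a.hp hb.1 with h1 | h1 <;> rcases key a.q a.hq hb.2 with h2 | h2
    · exact a.hne (h1.trans h2.symm)
    · exact a.hnantip (by rw [h1, h2, neg_neg])
    · exact a.hnantip (by rw [h1, h2])
    · exact a.hne (h1.trans h2.symm)
  -- the finite set of candidate endpoints
  set E : Finset V3 := (D.arcs.image Arc.p ∪ D.arcs.image Arc.q).filter (fun e => F e ≠ 0)
    with hE
  have hEne : E.Nonempty := by
    obtain ⟨a, ha⟩ := D.nonempty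
    rcases hendF a ha with h | h
    · exact ⟨a.p, by
        rw [hE, Finset.mem_filter]
        exact ⟨Finset.mem_union_left _ (Finset.mem_image_of_mem _ ha), h⟩⟩
    · exact ⟨a.q, by
        rw [hE, Finset.mem_filter]
        exact ⟨Finset.mem_union_right _ (Finset.mem_image_of_mem _ ha), h⟩⟩
  obtain ⟨e₀, he₀, hmin₀⟩ := Finset.exists_min_image E (fun e => (-(F e)).arg) hEne
  rw [hE, Finset.mem_filter] at he₀
  obtain ⟨he₀U, hFe₀⟩ := he₀
  set W := F e₀ with hW
  have hWne : W ≠ 0 := hFe₀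
  -- global minimality of the argument over all carrier points
  have hminAll : ∀ a ∈ D.arcs, ∀ x ∈ a.carrier, F x ≠ 0 → (-W).arg ≤ (-(F x)).arg := by
    intro a ha x hx hFx
    obtain ⟨s, t, hs, ht, hst, rfl⟩ := hx
    set v := s • a.p + t • a.q with hv
    have hvne : v ≠ 0 := Stmt4Aux.combo_ne_zero a hs ht hst
    have hnv : 0 < ‖v‖⁻¹ := by
      have : 0 < ‖v‖ := norm_pos_iff.mpr hvne
      positivity
    have hFvne : F v ≠ 0 := by
      intro h
      apply hFx
      rw [map_smul, h, smul_zero]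
    have harg : (-(F (‖v‖⁻¹ • v))).arg = (-(F v)).arg := by
      rw [map_smul, Complex.real_smul, ← mul_neg, Complex.arg_real_mul _ hnv]
    rw [harg]
    have hcomb : (↑s * -(F a.p) + ↑t * -(F a.q) : ℂ) = -(F v) := hemb a s t
    have hres := Stmt4Aux.argmin_cone (-(F a.p)) (-(F a.q)) (hconeN a ha) hs ht
      (by rw [hcomb]; exact neg_ne_zero.mpr hFvne)
    rw [hcomb] at hres
    rcases hres with ⟨hne, hle⟩ | ⟨hne, hle⟩
    · refine le_trans (hmin₀ a.p ?_) hle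
      rw [hE, Finset.mem_filter]
      exact ⟨Finset.mem_union_left _ (Finset.mem_image_of_mem _ ha),
        by simpa using hne⟩
    · refine le_trans (hmin₀ a.q ?_) hle
      rw [hE, Finset.mem_filter]
      exact ⟨Finset.mem_union_right _ (Finset.mem_image_of_mem _ ha),
        by simpa using hne⟩
  -- the half-plane functional
  set L : V3 → ℝ := fun x => (F x * (starRingEnd ℂ) W).im with hLdef
  have hexpand : ∀ (c : Arc) (s' t' : ℝ),
      (F (s' • c.p + t' • c.q) * (starRingEnd ℂ) W).im = s' * L c.p + t' * L c.q := by
    intro c s' t'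
    rw [hembp c s' t', add_mul,
      show (↑s' * F c.p) * (starRingEnd ℂ) W = ↑s' * (F c.p * (starRingEnd ℂ) W) from by ring,
      show (↑t' * F c.q) * (starRingEnd ℂ) W = ↑t' * (F c.q * (starRingEnd ℂ) W) from by ring,
      Complex.add_im, Stmt4Aux.real_mul_im, Stmt4Aux.real_mul_im]
  -- THE LOCAL STEP
  have hstep3 : ∀ c ∈ D.arcs, ∀ z ∈ c.interior, ∀ ρ : ℝ, 0 < ρ → F z = ↑ρ * W →
      L c.p = 0 ∧ L c.q = 0 := by
    intro c hc z hzint ρ hρ hFz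
    obtain ⟨s, t, hs, ht, hrep⟩ := Stmt4Aux.interior_rep hzint
    have hzc : z ∈ c.carrier := hzint.1
    have hFzne : F z ≠ 0 := by
      rw [hFz]
      exact mul_ne_zero (by exact_mod_cast hρ.ne') hWne
    have hargz : (-(F z)).arg = (-W).arg := by
      rw [hFz, show -((↑ρ:ℂ) * W) = ↑ρ * (-W) from by ring, Complex.arg_real_mul _ hρ]
    have hnotpos := havoid c hc z hzc
    have hslit : -(F z) ∈ Complex.slitPlane := by
      rw [Complex.mem_slitPlane_iff]
      rcases eq_or_ne (F z).im 0 with him | him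
      · left
        rw [Complex.neg_re]
        rcases lt_trichotomy ((F z).re) 0 with h | h | h
        · linarith
        · exfalso
          apply hFzne
          apply Complex.ext
          · rw [h, Complex.zero_re]
          · rw [him, Complex.zero_im]
        · exact absurd ⟨h, him⟩ hnotpos
      · right
        rw [Complex.neg_im]
        exact neg_ne_zero.mpr him
    obtain ⟨δ₁, hδ₁pos, hδ₁⟩ := Metric.continuousAt_iff.mp
      (Complex.continuousAt_arg hslit) 1 one_pos
    set δ := min δ₁ (‖F z‖) with hδ
    have hδpos : 0 < δ := lt_min hδ₁pos (norm_pos_iff.mpr hFzne)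
    have hvcont : Continuous (fun r : ℝ => (s - r) • c.p + (t + r) • c.q) := by
      apply Continuous.add
      · exact (continuous_const.sub continuous_id).smul continuous_const
      · exact (continuous_const.add continuous_id).smul continuous_const
    have hv0ne : (s - 0) • c.p + (t + 0) • c.q ≠ 0 := by
      rw [sub_zero, add_zero]
      exact Stmt4Aux.combo_ne_zero c hs.le ht.le (Or.inl hs.ne')
    have hFcont : Continuous (⇑F) := F.continuous_of_finiteDimensional
    have hgc : ContinuousAt (fun r : ℝ =>
        F (‖(s - r) • c.p + (t + r) • c.q‖⁻¹ • ((s - r) • c.p + (t + r) • c.q))) 0 := by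
      have hgeq : (fun r : ℝ =>
          F (‖(s - r) • c.p + (t + r) • c.q‖⁻¹ • ((s - r) • c.p + (t + r) • c.q)))
          = fun r : ℝ =>
            ‖(s - r) • c.p + (t + r) • c.q‖⁻¹ • F ((s - r) • c.p + (t + r) • c.q) := by
        funext r
        rw [map_smul]
      rw [hgeq]
      apply ContinuousAt.fun_smul
      · exact ContinuousAt.inv₀ (hvcont.norm).continuousAt (norm_ne_zero_iff.mpr hv0ne)
      · exact (hFcont.comp hvcont).continuousAt
    obtain ⟨ε₁, hε₁pos, hε₁⟩ := Metric.continuousAt_iff.mp hgc δ hδpos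
    set ε := min ε₁ (min s t) with hε
    have hεpos : 0 < ε := lt_min hε₁pos (lt_min hs ht)
    have hg0 : F (‖(s - 0) • c.p + (t + 0) • c.q‖⁻¹ • ((s - 0) • c.p + (t + 0) • c.q))
        = F z := by
      rw [sub_zero, add_zero, ← hrep]
    have hkey : ∀ r : ℝ, |r| < ε → 0 ≤ (s - r) * L c.p + (t + r) * L c.q := by
      intro r hr
      have hrabs := abs_lt.mp hr
      have hrs : 0 < s - r := by
        have h1 : ε ≤ s := le_trans (min_le_right _ _) (min_le_left _ _)
        linarith [hrabs.2]
      have hrt : 0 < t + r := by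
        have h1 : ε ≤ t := le_trans (min_le_right _ _) (min_le_right _ _)
        linarith [hrabs.1]
      set v := (s - r) • c.p + (t + r) • c.q with hv
      have hvne : v ≠ 0 := Stmt4Aux.combo_ne_zero c hrs.le hrt.le (Or.inl hrs.ne')
      have hxc : ‖v‖⁻¹ • v ∈ c.carrier :=
        Stmt4Aux.mem_carrier c hrs.le hrt.le (Or.inl hrs.ne')
      have hdist : dist (F (‖v‖⁻¹ • v)) (F z) < δ := by
        have h1 := hε₁ (show dist r 0 < ε₁ from by
          rw [Real.dist_eq, sub_zero]
          exact lt_of_lt_of_le hr (min_le_left _ _))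
        rw [hg0] at h1
        exact h1
      have hFxne : F (‖v‖⁻¹ • v) ≠ 0 := by
        intro h0
        rw [h0] at hdist
        rw [dist_eq_norm, zero_sub, norm_neg] at hdist
        have h2 : δ ≤ ‖F z‖ := min_le_right _ _
        linarith
      have hminx := hminAll c hc _ hxc hFxne
      have hclose : |(-(F (‖v‖⁻¹ • v))).arg - (-(F z)).arg| < 1 := by
        have h2 := hδ₁ (show dist (-(F (‖v‖⁻¹ • v))) (-(F z)) < δ₁ from by
          rw [dist_neg_neg]
          exact lt_of_lt_of_le hdist (min_le_left _ _))
        rwa [Real.dist_eq] at h2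
      have hdiff0 : 0 ≤ (-(F (‖v‖⁻¹ • v))).arg - (-(F z)).arg := by
        rw [hargz]
        linarith [hminx]
      have hdiffpi : (-(F (‖v‖⁻¹ • v))).arg - (-(F z)).arg ≤ Real.pi := by
        have h3 := abs_lt.mp hclose
        have h4 := Real.pi_gt_three
        linarith
      have hsin : 0 ≤ Real.sin ((-(F (‖v‖⁻¹ • v))).arg - (-(F z)).arg) :=
        Real.sin_nonneg_of_nonneg_of_le_pi hdiff0 hdiffpi
      have him : 0 ≤ (F (‖v‖⁻¹ • v) * (starRingEnd ℂ) (F z)).im := by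
        rw [show F (‖v‖⁻¹ • v) * (starRingEnd ℂ) (F z)
            = (-(F (‖v‖⁻¹ • v))) * (starRingEnd ℂ) (-(F z)) from by
          rw [map_neg]; ring]
        rw [Stmt4Aux.im_mul_conj]
        exact mul_nonneg (mul_nonneg (norm_nonneg _) (norm_nonneg _)) hsin
      have him2 : 0 ≤ (F (‖v‖⁻¹ • v) * (starRingEnd ℂ) W).im := by
        have heq2 : (F (‖v‖⁻¹ • v) * (starRingEnd ℂ) (F z)).im
            = ρ * (F (‖v‖⁻¹ • v) * (starRingEnd ℂ) W).im := by
          rw [hFz, map_mul, Complex.conj_ofReal,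
            show F (‖v‖⁻¹ • v) * ((↑ρ:ℂ) * (starRingEnd ℂ) W)
              = (↑ρ:ℂ) * (F (‖v‖⁻¹ • v) * (starRingEnd ℂ) W) from by ring,
            Stmt4Aux.real_mul_im]
        nlinarith [him, heq2]
      have hexp2 : (F (‖v‖⁻¹ • v) * (starRingEnd ℂ) W).im
          = ‖v‖⁻¹ * ((s - r) * L c.p + (t + r) * L c.q) := by
        rw [map_smul, Complex.real_smul,
          show (↑(‖v‖⁻¹):ℂ) * F v * (starRingEnd ℂ) W
            = (↑(‖v‖⁻¹):ℂ) * (F v * (starRingEnd ℂ) W) from by ring,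
          Stmt4Aux.real_mul_im, hv, hexpand]
      have hnv : 0 < ‖v‖⁻¹ := by
        have : 0 < ‖v‖ := norm_pos_iff.mpr hvne
        positivity
      rw [hexp2] at him2
      nlinarith [him2, hnv]
    -- conclude from the affine inequality
    have hLz : (F z * (starRingEnd ℂ) W).im = 0 := by
      rw [hFz, show (↑ρ:ℂ) * W * (starRingEnd ℂ) W = (↑ρ:ℂ) * (W * (starRingEnd ℂ) W)
        from by ring, Complex.mul_conj, ← Complex.ofReal_mul]
      exact Complex.ofReal_im _
    have h0 : s * L c.p + t * L c.q = 0 := by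
      set v0 := s • c.p + t • c.q with hv0
      have hv0ne' : v0 ≠ 0 := Stmt4Aux.combo_ne_zero c hs.le ht.le (Or.inl hs.ne')
      have h1 : (F z * (starRingEnd ℂ) W).im = ‖v0‖⁻¹ * (s * L c.p + t * L c.q) := by
        rw [hrep, map_smul, Complex.real_smul,
          show (↑(‖v0‖⁻¹):ℂ) * F v0 * (starRingEnd ℂ) W
            = (↑(‖v0‖⁻¹):ℂ) * (F v0 * (starRingEnd ℂ) W) from by ring,
          Stmt4Aux.real_mul_im, hv0, hexpand]
      rw [hLz] at h1
      have hnv0 : ‖v0‖⁻¹ ≠ 0 := by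
        have : 0 < ‖v0‖ := norm_pos_iff.mpr hv0ne'
        positivity
      rcases mul_eq_zero.mp h1.symm with h | h
      · exact absurd h hnv0
      · exact h
    have hk1 := hkey (ε/2) (by rw [abs_of_pos (by linarith)]; linarith)
    have hk2 := hkey (-(ε/2)) (by rw [abs_neg, abs_of_pos (by linarith)]; linarith)
    have hd : L c.q = L c.p := by nlinarith [hk1, hk2, h0, hεpos]
    constructor
    · have : (s + t) * L c.p = 0 := by
        rw [hd] at h0
        linarith [h0]
      rcases mul_eq_zero.mp this with h | h
      · exact absurd h (by positivity)
      · exact h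
    · have hLp : L c.p = 0 := by
        have : (s + t) * L c.p = 0 := by
          rw [hd] at h0
          linarith [h0]
        rcases mul_eq_zero.mp this with h | h
        · exact absurd h (by positivity)
        · exact h
      rw [hd, hLp]
  -- decode the minimizing endpoint
  have he₀arc : ∃ b₀ ∈ D.arcs, e₀ ∈ b₀.endpoints := by
    rcases Finset.mem_union.mp he₀U with h | h
    · obtain ⟨b₀, hb₀, hpe⟩ := Finset.mem_image.mp h
      exact ⟨b₀, hb₀, by rw [← hpe]; exact Set.mem_insert _ _⟩
    · obtain ⟨b₀, hb₀, hpe⟩ := Finset.mem_image.mp h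
      exact ⟨b₀, hb₀, by rw [← hpe]; exact Set.mem_insert_of_mem _ rfl⟩
  obtain ⟨b₀, hb₀, he₀end⟩ := he₀arc
  obtain ⟨b, hb, hhit⟩ := D.a2 b₀ hb₀ e₀ he₀end
  obtain ⟨hncol, -, hint⟩ := hhit
  have hLb := hstep3 b hb e₀ hint 1 one_pos (by rw [hW]; simp)
  obtain ⟨hLbp, hLbq⟩ := hLb
  -- decompose the endpoints of b along W
  have hFbp : F b.p = ↑((F b.p * (starRingEnd ℂ) W).re / Complex.normSq W) * W :=
    Stmt4Aux.pos_real_eq hWne hLbp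
  have hFbq : F b.q = ↑((F b.q * (starRingEnd ℂ) W).re / Complex.normSq W) * W :=
    Stmt4Aux.pos_real_eq hWne hLbq
  set lp : ℝ := (F b.p * (starRingEnd ℂ) W).re / Complex.normSq W with hlp
  set lq : ℝ := (F b.q * (starRingEnd ℂ) W).re / Complex.normSq W with hlq
  obtain ⟨s, t, hs, ht, hrep⟩ := Stmt4Aux.interior_rep hint
  set v := s • b.p + t • b.q with hv
  have hvne : v ≠ 0 := Stmt4Aux.combo_ne_zero b hs.le ht.le (Or.inl hs.ne')
  have hnv : 0 < ‖v‖ := norm_pos_iff.mpr hvne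
  have hWeq : W = ↑(‖v‖⁻¹ * (s * lp + t * lq)) * W := by
    have h1 : F e₀ = (↑(‖v‖⁻¹) : ℂ) * F v := by
      rw [hrep, map_smul, Complex.real_smul]
    calc W = F e₀ := hW
      _ = (↑(‖v‖⁻¹) : ℂ) * F v := h1
      _ = (↑(‖v‖⁻¹) : ℂ) * (↑s * (↑lp * W) + ↑t * (↑lq * W)) := by
          rw [hv, hembp b s t, hFbp, hFbq]
      _ = ↑(‖v‖⁻¹ * (s * lp + t * lq)) * W := by push_cast; ring
  have hcoef : ‖v‖⁻¹ * (s * lp + t * lq) = 1 := by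
    have h2 : (↑(‖v‖⁻¹ * (s * lp + t * lq)) : ℂ) * W = (1 : ℂ) * W := by
      rw [← hWeq, one_mul]
    have h3 := mul_right_cancel₀ hWne h2
    exact_mod_cast h3
  have hsumpos : 0 < s * lp + t * lq := by
    have h4 : s * lp + t * lq = ‖v‖ := by
      field_simp at hcoef
      linarith [hcoef]
    rw [h4]
    exact hnv
  have hcases : 0 < lp ∨ 0 < lq := by
    by_contra hcc
    push_neg at hcc
    nlinarith [hcc.1, hcc.2, hs, ht]
  -- final contradiction via a second application of A2
  have hnm : ⟪n, m⟫ = 0 := by rw [real_inner_comm]; exact hmn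
  have hnn : ⟪n, n⟫ = 1 := by rw [real_inner_self_eq_norm_mul_norm, hn, mul_one]
  have hLne : ∃ Lm : V3 →ₗ[ℝ] ℝ, (∀ x, Lm x = L x) ∧ Lm ≠ 0 := by
    refine ⟨{ toFun := L
              map_add' := by
                intro x y
                simp only [hLdef, map_add, add_mul, Complex.add_im]
              map_smul' := by
                intro c x
                simp only [hLdef, map_smul, Complex.real_smul, RingHom.id_apply,
                  smul_eq_mul, mul_assoc]
                rw [Stmt4Aux.real_mul_im] }, fun x => rfl, ?_⟩
    intro hLm0
    have hzm : L m = 0 := by simpa using DFunLike.congr_fun hLm0 m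
    have hzn : L n = 0 := by simpa using DFunLike.congr_fun hLm0 n
    have hFm : F m = 1 := by
      rw [hF]
      show (⟪m, m⟫ : ℂ) + (⟪n, m⟫ : ℂ) * Complex.I = 1
      rw [hmm, hnm]
      simp
    have hFn : F n = Complex.I := by
      rw [hF]
      show (⟪m, n⟫ : ℂ) + (⟪n, n⟫ : ℂ) * Complex.I = Complex.I
      rw [hmn, hnn]
      simp
    simp only [hLdef] at hzm hzn
    rw [hFm] at hzm
    rw [hFn] at hzn
    rw [one_mul, Complex.conj_im] at hzm
    rw [Complex.I_mul_im, Complex.conj_re] at hzn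
    apply hWne
    apply Complex.ext
    · exact hzn
    · exact neg_eq_zero.mp hzm
  obtain ⟨Lm, hLmeq, hLmne⟩ := hLne
  have hspan : ∀ c : Arc, L c.p = 0 → L c.q = 0 →
      Submodule.span ℝ {c.p, c.q} = LinearMap.ker Lm := by
    intro c h1 h2
    exact Stmt4Aux.span_eq_ker hLmne c (by rw [hLmeq c.p]; exact h1)
      (by rw [hLmeq c.q]; exact h2)
  rcases hcases with hposl | hposl
  · obtain ⟨b', hb', hhit'⟩ := D.a2 b hb b.p (Set.mem_insert _ _)
    obtain ⟨hncol', -, hint'⟩ := hhit'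
    obtain ⟨hLbp', hLbq'⟩ := hstep3 b' hb' b.p hint' lp hposl hFbp
    apply hncol'
    show b.greatCircle = b'.greatCircle
    unfold Arc.greatCircle
    rw [hspan b hLbp hLbq, hspan b' hLbp' hLbq']
  · obtain ⟨b', hb', hhit'⟩ := D.a2 b hb b.q (Set.mem_insert_of_mem _ rfl)
    obtain ⟨hncol', -, hint'⟩ := hhit'
    obtain ⟨hLbp', hLbq'⟩ := hstep3 b' hb' b.q hint' lq hposl hFbq
    apply hncol'
    show b.greatCircle = b'.greatCircle
    unfold Arc.greatCircle
    rw [hspan b hLbp hLbq, hspan b' hLbp' hLbq']
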